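/- Let h(t) = −t log₂ t − (1−t) log₂(1−t) for t ∈ [0,1] (with h(0) = h(1) = 0) and define h₀ : [0,1/4] → [0,1] by h₀(t) = h((1 − √(1−4t))/2). Then: h₀(t) = h(s) whenever s ∈ [0,1] and t = s(1−s); h₀(0) = 0; h₀ is nonnegative, monotone increasing, and concave on [0,1/4]; and 4t ≤ h₀(t) for all t ∈ [0,1/4]. -/

import Mathlib

open MeasureTheory Filter Topology
open scoped ENNReal

noncomputable section

/-- The lattice `ℤ^d`. -/
abbrev Zd (d : ℕ) := Fin d → ℤ

/-- The Hilbert space `ℓ²(ℤ^d)`. -/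
abbrev Hd (d : ℕ) := lp (fun _ : Zd d => ℂ) 2

variable {d : ℕ}

/-- The max (sup) norm `‖x‖ = max_i |x_i|` on `ℤ^d`, as a natural number. -/
def natNorm (x : Zd d) : ℕ := Finset.univ.sup fun i => (x i).natAbs

/-- Distance between two subsets of `ℤ^d` (`0` by convention if one of them is empty). -/
def setDist (C₁ C₂ : Set (Zd d)) : ℕ :=
  sInf {n | ∃ x ∈ C₁, ∃ y ∈ C₂, natNorm (x - y) = n}

/-- Boundary `∂C = {x ∈ C : dist({x}, Cᶜ) = 1}`. -/
def bdry (C : Set (Zd d)) : Set (Zd d) := {x ∈ C | setDist {x} Cᶜ = 1}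

/-- The standard basis vector `δ_x` of `ℓ²(ℤ^d)`. -/
def delta (x : Zd d) : Hd d := lp.single 2 x (1 : ℂ)

/-- Matrix element `A(x,y) = ⟨δ_x, A δ_y⟩`. -/
def matElem (A : Hd d →L[ℂ] Hd d) (x y : Zd d) : ℂ :=
  @inner ℂ _ _ (delta x) (A (delta y))

lemma indicator_norm_le (C : Set (Zd d)) (f : Hd d) (i : Zd d) :
    ‖C.indicator ⇑f i‖ ≤ ‖(f : ∀ _ : Zd d, ℂ) i‖ := by
  by_cases hi : i ∈ C
  · simp [Set.indicator_of_mem hi]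
  · simp [Set.indicator_of_notMem hi]

lemma memℓp_indicator (C : Set (Zd d)) (f : Hd d) : Memℓp (C.indicator ⇑f) 2 := by
  refine memℓp_gen ?_
  have hf : Summable fun i => ‖(f : ∀ _ : Zd d, ℂ) i‖ ^ (2 : ℝ≥0∞).toReal :=
    (memℓp_gen_iff (by norm_num)).mp (lp.memℓp f)
  refine hf.of_nonneg_of_le (fun i => by positivity) fun i =>
    Real.rpow_le_rpow (norm_nonneg _) (indicator_norm_le C f i) (by norm_num)

/-- The multiplication operator by the indicator of `C ⊆ ℤ^d` (orthogonal projection onto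
`ℓ²(C)`). -/
def chi (C : Set (Zd d)) : Hd d →L[ℂ] Hd d :=
  LinearMap.mkContinuous
    { toFun := fun f => (⟨C.indicator ⇑f, memℓp_indicator C f⟩ : Hd d)
      map_add' := by
        intro f g
        apply lp.ext
        funext x
        change C.indicator (⇑f + ⇑g) x = C.indicator ⇑f x + C.indicator ⇑g x
        by_cases hx : x ∈ C <;>
          simp [Set.indicator_of_mem, Set.indicator_of_notMem, hx, lp.coeFn_add]
      map_smul' := by
        intro c f
        apply lp.ext
        funext x
        by_cases hx : x ∈ C <;>
          simp [Set.indicator_of_mem, Set.indicator_of_notMem, hx, lp.coeFn_smul] }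
    1 (by
      intro f
      rw [one_mul]
      show ‖(⟨C.indicator ⇑f, memℓp_indicator C f⟩ : Hd d)‖ ≤ ‖f‖
      by_contra hcon
      push_neg at hcon
      have h2 : (0:ℝ) < (2 : ℝ≥0∞).toReal := by norm_num
      have hlt : ‖f‖ ^ (2 : ℝ≥0∞).toReal
          < ‖(⟨C.indicator ⇑f, memℓp_indicator C f⟩ : Hd d)‖ ^ (2 : ℝ≥0∞).toReal :=
        Real.rpow_lt_rpow (norm_nonneg _) hcon h2
      have hle : ‖(⟨C.indicator ⇑f, memℓp_indicator C f⟩ : Hd d)‖ ^ (2 : ℝ≥0∞).toReal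
          ≤ ‖f‖ ^ (2 : ℝ≥0∞).toReal := by
        rw [lp.norm_rpow_eq_tsum h2, lp.norm_rpow_eq_tsum h2 f]
        exact Summable.tsum_le_tsum
          (fun i => Real.rpow_le_rpow (norm_nonneg _) (indicator_norm_le C f i) h2.le)
          ((memℓp_gen_iff h2).mp (lp.memℓp _)) ((memℓp_gen_iff h2).mp (lp.memℓp f))
      exact absurd hle (not_le.mpr hlt))

/-- `Π_{C₁,C₂} = χ_{C₁} P χ_{C₂} P χ_{C₁}`. -/
def PiOp (P : Hd d →L[ℂ] Hd d) (C₁ C₂ : Set (Zd d)) : Hd d →L[ℂ] Hd d :=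
  chi C₁ ∘L P ∘L chi C₂ ∘L P ∘L chi C₁

/-- `Π_C = Π_{C,Cᶜ}`. -/
def PiC (P : Hd d →L[ℂ] Hd d) (C : Set (Zd d)) : Hd d →L[ℂ] Hd d := PiOp P C Cᶜ

/-- `A` is an orthogonal projection. -/
def IsOrthoProj (P : Hd d →L[ℂ] Hd d) : Prop := IsSelfAdjoint P ∧ P ∘L P = P

/-- Trace of (the restriction to `ℓ²(C)` of) `A` over a subset `C ⊆ ℤ^d`:
`Σ_{x∈C} Re A(x,x)`. -/
def trSet (C : Set (Zd d)) (A : Hd d →L[ℂ] Hd d) : ℝ :=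
  ∑' x : C, (matElem A x x).re

/-- `[0,∞]`-valued trace over a subset `C ⊆ ℤ^d`. -/
def trSetNN (C : Set (Zd d)) (A : Hd d →L[ℂ] Hd d) : ℝ≥0∞ :=
  ∑' x : C, ENNReal.ofReal (matElem A x x).re

/-- The cube `Λ_M = ([−M,M] ∩ ℤ)^d`. -/
def cube (d M : ℕ) : Set (Zd d) := {x | ∀ i, |x i| ≤ (M : ℤ)}

/-- Condition 1 on the test function `f`, with exponent `α`. -/
def Condition1 (f : ℝ → ℝ) (α : ℝ) : Prop :=
  (0 < α ∧ α ≤ 1) ∧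
  (∀ x : ℝ, x ∉ Set.Icc (0:ℝ) (1/4) → f x = 0) ∧
  ContDiffOn ℝ 2 f (Set.Ioc 0 (1/4)) ∧
  ∃ Cf : ℝ, ∀ k : ℕ, k ≤ 2 → ∀ x ∈ Set.Ioc (0:ℝ) (1/4),
    |iteratedDerivWithin k f (Set.Ioc 0 (1/4)) x| * x ^ ((k : ℝ) - α) ≤ Cf

/-- A measure preserving ergodic action of `ℤ^d` on a probability space. -/
structure ErgAction (d : ℕ) {Ω : Type*} [MeasurableSpace Ω] (μ : Measure Ω)
    (T : Zd d → Ω → Ω) : Prop where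
  measPres : ∀ a, MeasurePreserving (T a) μ μ
  base : T 0 = id
  add : ∀ a b, T (a + b) = T a ∘ T b
  ergodic : ∀ s : Set Ω, MeasurableSet s → (∀ a, T a ⁻¹' s = s) → μ s = 0 ∨ μ s = 1

/-- Assumption 1: `P(ω)` is an ergodic family of orthogonal projections with exponentially
decaying expected matrix elements. -/
structure Assumption1 (d : ℕ) {Ω : Type*} [MeasurableSpace Ω] (μ : Measure Ω)
    (T : Zd d → Ω → Ω) (P : Ω → Hd d →L[ℂ] Hd d) (C₀ γ : ℝ) : Prop where
  act : ErgAction d μ T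
  proj : ∀ᵐ ω ∂μ, IsOrthoProj (P ω)
  meas : ∀ x y, Measurable fun ω => matElem (P ω) x y
  covariant : ∀ a : Zd d, ∀ᵐ ω ∂μ, ∀ x y,
    matElem (P (T a ω)) x y = matElem (P ω) (x + a) (y + a)
  γpos : 0 < γ
  decay : ∀ x y, ∫ ω, ‖matElem (P ω) x y‖ ∂μ
    ≤ C₀ * Real.exp (-γ * natNorm (x - y))


/-- The half-space `ℤ^d_+ = ([0,∞) ∩ ℤ) × ℤ^{d-1}` (first coordinate nonnegative). -/
def Zplus (d : ℕ) : Set (Zd d) := {x | ∀ i : Fin d, (i : ℕ) = 0 → 0 ≤ x i}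

/-- The half-line `ℤ₋ = (−∞,0] ∩ ℤ`, inside `ℤ¹`. -/
def Zminus1 : Set (Zd 1) := {x | x 0 ≤ 0}

/-- The lattice point `j·e₁ ∈ ℤ^d`. -/
def axisPt (d : ℕ) (j : ℕ) : Zd d := fun i => if (i : ℕ) = 0 then (j : ℤ) else 0

/-- The face `F_M^{(i,s)}` of the cube `Λ_M` (`s = true` for the `+` face). -/
def face (d M : ℕ) (i : Fin d) (s : Bool) : Set (Zd d) :=
  {x ∈ cube d M | x i = if s then (M : ℤ) else -(M : ℤ)}

/-- The truncated face `F̂_M^{(i,s)}` (points at distance `≥ 3ℓ` from all other faces). -/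
def faceHat (d M ℓ : ℕ) (i : Fin d) (s : Bool) : Set (Zd d) :=
  {x ∈ face d M i s | ∀ j t, (j, t) ≠ (i, s) → 3 * ℓ ≤ setDist {x} (face d M j t)}

/-- The surface layer `B_M^{(i,s)}`, the `ℓ`-neighborhood of `F̂_M^{(i,s)}` inside `Λ_M`. -/
def layer (d M ℓ : ℕ) (i : Fin d) (s : Bool) : Set (Zd d) :=
  {x ∈ cube d M | setDist {x} (faceHat d M ℓ i s) < ℓ}

/-- The lattice half-space `ℤ^d_{+,(i,s)}` containing `Λ_M` with `F_M^{(i,s)}` on its boundary. -/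
def halfSp (d M : ℕ) (i : Fin d) (s : Bool) : Set (Zd d) :=
  {x | if s then x i ≤ (M : ℤ) else -(M : ℤ) ≤ x i}

/-- The error term `R_d(M) = (M^d e^{−αγℓ/2} + (d−1) ℓ² M^{d−2})²`. -/
def RdErr (d M ℓ : ℕ) (α γ : ℝ) : ℝ :=
  ((M : ℝ) ^ d * Real.exp (-(α * γ * ℓ) / 2)
    + ((d : ℝ) - 1) * (ℓ : ℝ) ^ 2 * (M : ℝ) ^ (d - 2)) ^ 2


namespace Statement5Aux

/-- Explicit entropy function. -/
noncomputable def Hfun : ℝ → ℝ := fun t => (Real.negMulLog t + Real.negMulLog (1 - t)) / Real.log 2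

/-- The substitution `t ↦ (1 - √(1-4t))/2`. -/
noncomputable def Gfun : ℝ → ℝ := fun t => (1 - Real.sqrt (1 - 4 * t)) / 2

/-- First derivative of `Hfun ∘ Gfun` on `(0,1/4)`. -/
noncomputable def D1fun : ℝ → ℝ := fun t =>
  (Real.log (1 - Gfun t) - Real.log (Gfun t)) / (Real.sqrt (1 - 4 * t) * Real.log 2)

/-- Second derivative of `Hfun ∘ Gfun` on `(0,1/4)`. -/
noncomputable def D2fun : ℝ → ℝ := fun t =>
  (2 * (Real.log (1 - Gfun t) - Real.log (Gfun t)) * t - Real.sqrt (1 - 4 * t))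
    / (t * Real.sqrt (1 - 4 * t) ^ 3 * Real.log 2)

lemma log2_pos : (0:ℝ) < Real.log 2 := Real.log_pos one_lt_two

lemma continuous_H : Continuous Hfun := by
  unfold Hfun
  exact (Real.continuous_negMulLog.add
    (Real.continuous_negMulLog.comp (continuous_const.sub continuous_id))).div_const _

lemma continuous_G : Continuous Gfun := by
  unfold Gfun
  exact (continuous_const.sub (Real.continuous_sqrt.comp
    (continuous_const.sub (continuous_const.mul continuous_id)))).div_const _

lemma hasDerivAt_key (x : ℝ) (hx1 : -1 < x) (hx2 : x < 1) :
    HasDerivAt (fun x : ℝ => 2 * x - (1 - x ^ 2) * (Real.log (1 + x) - Real.log (1 - x)))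
      (2 * x * (Real.log (1 + x) - Real.log (1 - x))) x := by
  have h1 : (1:ℝ) + x ≠ 0 := by intro h; linarith
  have h2 : (1:ℝ) - x ≠ 0 := by intro h; linarith
  have l1 : HasDerivAt (fun x : ℝ => Real.log (1 + x)) (1 / (1 + x)) x := by
    simpa using ((hasDerivAt_id x).const_add 1).log h1
  have l2 : HasDerivAt (fun x : ℝ => Real.log (1 - x)) (-1 / (1 - x)) x := by
    simpa using ((hasDerivAt_id x).const_sub 1).log h2
  have q : HasDerivAt (fun x : ℝ => 1 - x ^ 2) (-(2 * x)) x := by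
    simpa using (hasDerivAt_pow 2 x).const_sub 1
  have p := q.mul (l1.sub l2)
  have tot := ((hasDerivAt_id x).const_mul 2).sub p
  convert tot using 1
  · rfl
  · rfl
  · rfl
  field_simp
  simp only [Pi.sub_apply]
  ring

lemma key_ineq (r : ℝ) (hr0 : 0 ≤ r) (hr1 : r < 1) :
    (1 - r ^ 2) * (Real.log (1 + r) - Real.log (1 - r)) ≤ 2 * r := by
  have mono : MonotoneOn
      (fun x : ℝ => 2 * x - (1 - x ^ 2) * (Real.log (1 + x) - Real.log (1 - x)))
      (Set.Ico (0:ℝ) 1) := by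
    apply monotoneOn_of_deriv_nonneg (convex_Ico 0 1)
    · have c1 : ContinuousOn (fun x : ℝ => Real.log (1 + x)) (Set.Ico (0:ℝ) 1) := by
        apply ContinuousOn.log (by fun_prop)
        intro x hx h; have := hx.1; linarith
      have c2 : ContinuousOn (fun x : ℝ => Real.log (1 - x)) (Set.Ico (0:ℝ) 1) := by
        apply ContinuousOn.log (by fun_prop)
        intro x hx h; have := hx.2; linarith
      exact ((continuous_const.mul continuous_id).continuousOn).sub
        ((continuous_const.sub (continuous_pow 2)).continuousOn.mul (c1.sub c2))
    · rw [interior_Ico]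
      intro x hx
      exact (hasDerivAt_key x (by linarith [hx.1]) hx.2).differentiableAt.differentiableWithinAt
    · rw [interior_Ico]
      intro x hx
      rw [(hasDerivAt_key x (by linarith [hx.1]) hx.2).deriv]
      have hlog : Real.log (1 - x) ≤ Real.log (1 + x) :=
        Real.log_le_log (by linarith [hx.1, hx.2]) (by linarith [hx.1, hx.2])
      have hx0 : (0:ℝ) ≤ x := le_of_lt hx.1
      nlinarith
  have h := mono (Set.mem_Ico.mpr ⟨le_refl 0, one_pos⟩) (Set.mem_Ico.mpr ⟨hr0, hr1⟩) hr0
  simp only [Real.log_one] at h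
  norm_num at h
  linarith

lemma hasDerivAt_H {s : ℝ} (h0 : s ≠ 0) (h1 : s ≠ 1) :
    HasDerivAt Hfun ((Real.log (1 - s) - Real.log s) / Real.log 2) s := by
  have h1' : (1:ℝ) - s ≠ 0 := sub_ne_zero.mpr (Ne.symm h1)
  have l1 : HasDerivAt Real.negMulLog (-Real.log s - 1) s := Real.hasDerivAt_negMulLog h0
  have l2 : HasDerivAt (fun u : ℝ => Real.negMulLog (1 - u))
      ((-Real.log (1 - s) - 1) * (-1)) s :=
    (Real.hasDerivAt_negMulLog h1').comp s (by simpa using (hasDerivAt_id s).const_sub 1)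
  have tot := (l1.add l2).div_const (Real.log 2)
  have heq : (-Real.log s - 1 + (-Real.log (1 - s) - 1) * (-1)) / Real.log 2
      = (Real.log (1 - s) - Real.log s) / Real.log 2 := by ring
  rw [heq] at tot
  exact tot

lemma hasDerivAt_G {t : ℝ} (ht : t ∈ Set.Ioo (0:ℝ) (1/4)) :
    HasDerivAt Gfun (1 / Real.sqrt (1 - 4 * t)) t := by
  have h4 : (0:ℝ) < 1 - 4 * t := by linarith [ht.2]
  have hrpos : 0 < Real.sqrt (1 - 4 * t) := Real.sqrt_pos.mpr h4
  have hu : HasDerivAt (fun t : ℝ => 1 - 4 * t) (-4) t := by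
    simpa using ((hasDerivAt_id t).const_mul 4).const_sub 1
  have hr : HasDerivAt (fun t : ℝ => Real.sqrt (1 - 4 * t))
      (1 / (2 * Real.sqrt (1 - 4 * t)) * (-4)) t :=
    (Real.hasDerivAt_sqrt (ne_of_gt h4)).comp t hu
  have tot := (hr.const_sub 1).div_const 2
  have heq : -(1 / (2 * Real.sqrt (1 - 4 * t)) * (-4)) / 2 = 1 / Real.sqrt (1 - 4 * t) := by
    field_simp
    ring
  rw [heq] at tot
  exact tot

/-- Basic facts about the substitution on `(0,1/4)`. -/
lemma G_facts {t : ℝ} (ht : t ∈ Set.Ioo (0:ℝ) (1/4)) :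
    0 < Real.sqrt (1 - 4 * t) ∧ Real.sqrt (1 - 4 * t) < 1 ∧
      Real.sqrt (1 - 4 * t) ^ 2 = 1 - 4 * t := by
  have h4 : (0:ℝ) < 1 - 4 * t := by linarith [ht.2]
  refine ⟨Real.sqrt_pos.mpr h4, ?_, Real.sq_sqrt h4.le⟩
  have h := Real.sqrt_lt_sqrt h4.le (show 1 - 4 * t < 1 by linarith [ht.1])
  simpa using h

lemma hasDerivAt_HG {t : ℝ} (ht : t ∈ Set.Ioo (0:ℝ) (1/4)) :
    HasDerivAt (Hfun ∘ Gfun) (D1fun t) t := by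
  obtain ⟨hrpos, hrlt, hr2⟩ := G_facts ht
  have hs0 : Gfun t ≠ 0 := by
    have : (0:ℝ) < (1 - Real.sqrt (1 - 4 * t)) / 2 := by linarith
    exact ne_of_gt this
  have hs1 : Gfun t ≠ 1 := by
    have : (1 - Real.sqrt (1 - 4 * t)) / 2 < 1 := by linarith
    exact ne_of_lt this
  have hHG := (hasDerivAt_H hs0 hs1).comp t (hasDerivAt_G ht)
  have heq : (Real.log (1 - Gfun t) - Real.log (Gfun t)) / Real.log 2
      * (1 / Real.sqrt (1 - 4 * t)) = D1fun t := by
    unfold D1fun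
    rw [div_mul_div_comm, mul_one, mul_comm (Real.log 2)]
  rw [heq] at hHG
  exact hHG

lemma hasDerivAt_D1 {t : ℝ} (ht : t ∈ Set.Ioo (0:ℝ) (1/4)) :
    HasDerivAt D1fun (D2fun t) t := by
  obtain ⟨hrpos, hrlt, hr2⟩ := G_facts ht
  set r := Real.sqrt (1 - 4 * t) with hrdef
  have hspos : 0 < Gfun t := by
    show 0 < (1 - r) / 2; linarith
  have h1s : 0 < 1 - Gfun t := by
    show 0 < 1 - (1 - r) / 2; linarith
  have hG := hasDerivAt_G ht
  have lA : HasDerivAt (fun u => Real.log (1 - Gfun u)) (-(1 / r) / (1 - Gfun t)) t :=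
    (hG.const_sub 1).log (ne_of_gt h1s)
  have lB : HasDerivAt (fun u => Real.log (Gfun u)) ((1 / r) / Gfun t) t :=
    hG.log (ne_of_gt hspos)
  have hN := lA.sub lB
  have hden : HasDerivAt (fun u : ℝ => Real.sqrt (1 - 4 * u) * Real.log 2)
      ((1 / (2 * r) * (-4)) * Real.log 2) t := by
    have h4 : (0:ℝ) < 1 - 4 * t := by linarith [ht.2]
    have hu : HasDerivAt (fun u : ℝ => 1 - 4 * u) (-4) t := by
      simpa using ((hasDerivAt_id t).const_mul 4).const_sub 1
    exact ((Real.hasDerivAt_sqrt (ne_of_gt h4)).comp t hu).mul_const _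
  have hdenne : r * Real.log 2 ≠ 0 := by positivity
  have hdiv := hN.div hden hdenne
  have heq : ((-(1 / r) / (1 - Gfun t) - 1 / r / Gfun t) * (r * Real.log 2)
        - (Real.log (1 - Gfun t) - Real.log (Gfun t)) * (1 / (2 * r) * (-4) * Real.log 2))
        / (r * Real.log 2) ^ 2 = D2fun t := by
    unfold D2fun
    rw [← hrdef]
    have hsval : Gfun t = (1 - r) / 2 := rfl
    have htval : t = (1 - r ^ 2) / 4 := by rw [hr2]; ring
    rw [hsval]
    rw [show (1:ℝ) - (1 - r) / 2 = (1 + r) / 2 by ring]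
    have hL2 : Real.log 2 ≠ 0 := ne_of_gt log2_pos
    have hr0 : r ≠ 0 := ne_of_gt hrpos
    have hm : (1:ℝ) - r ≠ 0 := by intro h; nlinarith
    have hp : (1:ℝ) + r ≠ 0 := by positivity
    have ht0 : t ≠ 0 := ne_of_gt ht.1
    have hmp : (1:ℝ) - r ^ 2 ≠ 0 := by intro h; nlinarith
    set LA := Real.log ((1 + r) / 2) with hLA
    set LB := Real.log ((1 - r) / 2) with hLB
    rw [htval]
    field_simp [hmp]
    ring
  rw [← hrdef, Pi.sub_apply, heq] at hdiv
  exact hdiv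

lemma D1_nonneg {t : ℝ} (ht : t ∈ Set.Ioo (0:ℝ) (1/4)) : 0 ≤ D1fun t := by
  obtain ⟨hrpos, hrlt, hr2⟩ := G_facts ht
  have hspos : 0 < Gfun t := by
    show 0 < (1 - Real.sqrt (1 - 4 * t)) / 2; linarith
  have hle : Gfun t ≤ 1 - Gfun t := by
    show (1 - Real.sqrt (1 - 4 * t)) / 2 ≤ 1 - (1 - Real.sqrt (1 - 4 * t)) / 2
    linarith
  have hlog : Real.log (Gfun t) ≤ Real.log (1 - Gfun t) := Real.log_le_log hspos hle
  apply div_nonneg (by linarith)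
  positivity

lemma D2_nonpos {t : ℝ} (ht : t ∈ Set.Ioo (0:ℝ) (1/4)) : D2fun t ≤ 0 := by
  obtain ⟨hrpos, hrlt, hr2⟩ := G_facts ht
  set r := Real.sqrt (1 - 4 * t) with hrdef
  unfold D2fun
  rw [← hrdef]
  apply div_nonpos_of_nonpos_of_nonneg
  swap
  · exact mul_nonneg (mul_nonneg ht.1.le (pow_nonneg hrpos.le 3)) log2_pos.le
  have hsval : Gfun t = (1 - r) / 2 := rfl
  have h1sval : 1 - Gfun t = (1 + r) / 2 := by rw [hsval]; ring
  have hm : (0:ℝ) < 1 - r := by linarith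
  have hp : (0:ℝ) < 1 + r := by linarith
  have hlogA : Real.log (1 - Gfun t) = Real.log (1 + r) - Real.log 2 := by
    rw [h1sval, Real.log_div (ne_of_gt hp) two_ne_zero]
  have hlogB : Real.log (Gfun t) = Real.log (1 - r) - Real.log 2 := by
    rw [hsval, Real.log_div (ne_of_gt hm) two_ne_zero]
  have htval : t = (1 - r ^ 2) / 4 := by rw [hr2]; ring
  have hkey := key_ineq r hrpos.le hrlt
  rw [hlogA, hlogB, htval]
  nlinarith [hkey]

lemma HG_quarter : (Hfun ∘ Gfun) (1/4 : ℝ) = 1 := by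
  have h1 : (1:ℝ) - 4 * (1/4) = 0 := by norm_num
  have hg : Gfun (1/4 : ℝ) = 1/2 := by
    unfold Gfun; rw [h1, Real.sqrt_zero]; norm_num
  show Hfun (Gfun (1/4 : ℝ)) = 1
  rw [hg]
  unfold Hfun
  rw [show (1:ℝ) - 1/2 = 1/2 by norm_num]
  rw [Real.negMulLog]
  rw [show Real.log (1/2 : ℝ) = -Real.log 2 by
    rw [show (1/2 : ℝ) = 2⁻¹ by norm_num, Real.log_inv]]
  field_simp
  norm_num

lemma HG_zero : (Hfun ∘ Gfun) 0 = 0 := by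
  have hg : Gfun (0:ℝ) = 0 := by unfold Gfun; norm_num
  show Hfun (Gfun 0) = 0
  rw [hg]
  unfold Hfun
  simp [Real.negMulLog]

end Statement5Aux



/-- Elementary properties of the binary Shannon entropy `h` and of
`h₀(t) = h((1−√(1−4t))/2)` on `[0,1/4]`. -/
theorem statement5 :
    ∀ h h0 : ℝ → ℝ,
      (∀ t, h t = -t * Real.logb 2 t - (1 - t) * Real.logb 2 (1 - t)) →
      (∀ t, h0 t = h ((1 - Real.sqrt (1 - 4 * t)) / 2)) →
      (∀ s : ℝ, s ∈ Set.Icc (0:ℝ) 1 → h0 (s * (1 - s)) = h s) ∧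
      h0 0 = 0 ∧
      (∀ t ∈ Set.Icc (0:ℝ) (1/4), 0 ≤ h0 t) ∧
      MonotoneOn h0 (Set.Icc 0 (1/4)) ∧
      ConcaveOn ℝ (Set.Icc 0 (1/4)) h0 ∧
      (∀ t ∈ Set.Icc (0:ℝ) (1/4), 4 * t ≤ h0 t) := by
  intro h h0 hh hh0
  open Statement5Aux in
  have eh : h = Hfun := by
    funext t
    rw [hh t]
    unfold Hfun Real.negMulLog Real.logb
    ring
  subst eh
  have eh0 : h0 = Statement5Aux.Hfun ∘ Statement5Aux.Gfun := by
    funext t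
    exact hh0 t
  subst eh0
  open Statement5Aux in
  have contHG : Continuous (Hfun ∘ Gfun) := continuous_H.comp continuous_G
  open Statement5Aux in
  have conc : ConcaveOn ℝ (Set.Icc (0:ℝ) (1/4)) (Hfun ∘ Gfun) := by
    apply concaveOn_of_hasDerivWithinAt2_nonpos (f' := D1fun) (f'' := D2fun) (convex_Icc _ _)
      contHG.continuousOn
    · intro x hx; rw [interior_Icc] at hx; exact (hasDerivAt_HG hx).hasDerivWithinAt
    · intro x hx; rw [interior_Icc] at hx; exact (hasDerivAt_D1 hx).hasDerivWithinAt
    · intro x hx; rw [interior_Icc] at hx; exact D2_nonpos hx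
  open Statement5Aux in
  have mono : MonotoneOn (Hfun ∘ Gfun) (Set.Icc (0:ℝ) (1/4)) := by
    apply monotoneOn_of_deriv_nonneg (convex_Icc _ _) contHG.continuousOn
    · rw [interior_Icc]; intro x hx
      exact (hasDerivAt_HG hx).differentiableAt.differentiableWithinAt
    · rw [interior_Icc]; intro x hx
      rw [(hasDerivAt_HG hx).deriv]; exact D1_nonneg hx
  open Statement5Aux in
  have h6 : ∀ t ∈ Set.Icc (0:ℝ) (1/4), 4 * t ≤ (Hfun ∘ Gfun) t := by
    intro t ht
    have hmem0 : (0:ℝ) ∈ Set.Icc (0:ℝ) (1/4) := Set.left_mem_Icc.mpr (by norm_num)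
    have hmemq : (1/4:ℝ) ∈ Set.Icc (0:ℝ) (1/4) := Set.right_mem_Icc.mpr (by norm_num)
    have hc := conc.2 hmem0 hmemq (show (0:ℝ) ≤ 1 - 4*t by linarith [ht.2])
      (show (0:ℝ) ≤ 4*t by linarith [ht.1]) (show (1 - 4*t) + 4*t = 1 by ring)
    have harg : (1 - 4*t) • (0:ℝ) + (4*t) • (1/4 : ℝ) = t := by
      simp only [smul_eq_mul]; ring
    rw [harg, HG_zero, HG_quarter] at hc
    simp only [smul_eq_mul] at hc
    linarith
  open Statement5Aux in
  have symm : ∀ s : ℝ, s ∈ Set.Icc (0:ℝ) 1 → (Hfun ∘ Gfun) (s * (1 - s)) = Hfun s := by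
    intro s hs
    have hsq : Real.sqrt (1 - 4 * (s * (1 - s))) = |1 - 2*s| := by
      rw [show (1:ℝ) - 4 * (s * (1 - s)) = (1 - 2*s)^2 by ring, Real.sqrt_sq_eq_abs]
    show Hfun ((1 - Real.sqrt (1 - 4 * (s * (1 - s)))) / 2) = Hfun s
    rw [hsq]
    rcases le_total s (1/2) with hle | hge
    · rw [abs_of_nonneg (by linarith), show ((1:ℝ) - (1 - 2*s))/2 = s by ring]
    · rw [abs_of_nonpos (by linarith), show ((1:ℝ) - -(1 - 2*s))/2 = 1 - s by ring]
      unfold Hfun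
      rw [show (1:ℝ) - (1 - s) = s by ring]
      ring
  refine ⟨symm, Statement5Aux.HG_zero, ?_, mono, conc, h6⟩
  intro t ht
  linarith [h6 t ht, ht.1]

end
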